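/- Every partition λ satisfying: h(λ) < p, the p-core of λ is empty, and all λ-normal nodes have the same residue mod p, is a staircase partition st(r₂,…,r_k; i₁,…,i_{k−1}), i.e. λ = P(Λ) where Λ is the abacus with beads at (−∞,0) ∪ [p i₁, p i₁ + r₂) ∪ [p i₂ + r₂, p i₂ + r₃) ∪ ⋯ ∪ [p i_{k−1} + r_{k−1}, p i_{k−1} + r_k), for some integers k ≥ 1, 0 < r₂ < ⋯ < r_k < p and i₁ > ⋯ > i_{k−1} ≥ 0 (with λ = ∅ when k = 1). -/

import Mathlib

open scoped Classical

/-- A partition of a natural number: a weakly decreasing, eventually zero sequence of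
naturals; `part i` is the `i`-th part for `i ≥ 1` (the value `part 0` is irrelevant). -/
structure Ptn where
  part : ℕ → ℕ
  antitone : ∀ ⦃i j : ℕ⦄, 1 ≤ i → i ≤ j → part j ≤ part i
  eventually_zero : ∃ N, ∀ i, N ≤ i → part i = 0

namespace Ptn

/-- The height of a partition: the number of (equivalently, the largest index of a)
nonzero part. -/
noncomputable def height (l : Ptn) : ℕ := sSup {i | 1 ≤ i ∧ l.part i ≠ 0}

/-- Row `i` carries a removable node `(i, λ_i)`. -/
def Removable (l : Ptn) (i : ℕ) : Prop := 1 ≤ i ∧ l.part (i + 1) < l.part i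

/-- Row `i` carries an addable node `(i, λ_i + 1)`. -/
def Addable (l : Ptn) (i : ℕ) : Prop := i = 1 ∨ (2 ≤ i ∧ l.part i < l.part (i - 1))

/-- Residue mod `p` of the removable node in row `i`, namely `λ_i - i  (mod p)`. -/
def remRes (p : ℕ) (l : Ptn) (i : ℕ) : ZMod p := (((l.part i : ℤ) - (i : ℤ) : ℤ) : ZMod p)

/-- Residue mod `p` of the addable node in row `i`, namely `λ_i + 1 - i  (mod p)`. -/
def addRes (p : ℕ) (l : Ptn) (i : ℕ) : ZMod p :=
  (((l.part i : ℤ) + 1 - (i : ℤ) : ℤ) : ZMod p)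

/-- The removable node in row `r` is normal (signature rule): for every `u < r` the
number of addable nodes of the same residue in rows `[u, r)` is at most the number of
removable nodes of the same residue in rows `(u, r)`. -/
def Normal (p : ℕ) (l : Ptn) (r : ℕ) : Prop :=
  l.Removable r ∧ ∀ u, 1 ≤ u → u < r →
    ((Finset.Ico u r).filter (fun i => l.Addable i ∧ l.addRes p i = l.remRes p r)).card ≤
    ((Finset.Ioo u r).filter (fun i => l.Removable i ∧ l.remRes p i = l.remRes p r)).card

/-- A good node is the highest normal node of its residue. -/
def Good (p : ℕ) (l : Ptn) (r : ℕ) : Prop :=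
  l.Normal p r ∧ ∀ r', l.Normal p r' → l.remRes p r' = l.remRes p r → r ≤ r'

end Ptn

/-- Dominance order on part-functions: all partial sums of `f` dominate those of `g`. -/
def Dominates (f g : ℕ → ℕ) : Prop :=
  ∀ i, ∑ j ∈ Finset.Icc 1 i, g j ≤ ∑ j ∈ Finset.Icc 1 i, f j

/-- Remove one node from row `r`. -/
def removeAt (f : ℕ → ℕ) (r : ℕ) : ℕ → ℕ := fun i => if i = r then f i - 1 else f i

/-- The canonical beta-set of a partition: `n` is a bead iff `n = λ_i - i` for some `i ≥ 1`. -/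
def Beta (l : Ptn) (n : ℤ) : Prop := ∃ i : ℕ, 1 ≤ i ∧ (l.part i : ℤ) - (i : ℤ) = n

/-- `m` is obtained from `l` by removing one rim `p`-hook (moving a bead of the canonical
beta-set up by `p`). -/
def RemoveHook (p : ℕ) (l m : Ptn) : Prop :=
  ∃ a : ℤ, Beta l a ∧ ¬ Beta l (a - p) ∧
    ∀ n : ℤ, Beta m n ↔ (n ≠ a ∧ (n = a - (p : ℤ) ∨ Beta l n))

/-- A partition with no rim `p`-hook. -/
def IsPCore (p : ℕ) (c : Ptn) : Prop := ¬ ∃ m, RemoveHook p c m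

/-- `c` is the `p`-core of `l`. -/
def PCore (p : ℕ) (l c : Ptn) : Prop :=
  Relation.ReflTransGen (RemoveHook p) l c ∧ IsPCore p c

/-- The `p`-core of `l` is empty. -/
def EmptyCore (p : ℕ) (l : Ptn) : Prop :=
  ∃ c : Ptn, PCore p l c ∧ ∀ i, 1 ≤ i → c.part i = 0

/-- An abacus: eventually beads (`true`) to the left and spaces (`false`) to the right. -/
structure Abacus where
  f : ℤ → Bool
  low : ∃ N : ℤ, ∀ n, n ≤ N → f n = true
  high : ∃ N : ℤ, ∀ n, N ≤ n → f n = false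

/-- The abacus `Λ` displays the part-function `l`: if `a 1 > a 2 > ⋯` enumerates the
beads of `Λ`, then `l i` is the number of spaces below the `i`-th bead. -/
def Displays (Λ : Abacus) (l : ℕ → ℕ) : Prop :=
  ∃ a : ℕ → ℤ,
    (∀ i, 1 ≤ i → a (i + 1) < a i) ∧
    (∀ n : ℤ, Λ.f n = true ↔ ∃ i, 1 ≤ i ∧ a i = n) ∧
    (∀ i, 1 ≤ i → l i = Set.ncard {n : ℤ | n ≤ a i ∧ Λ.f n = false})

namespace Stair


lemma part_eq_zero_of_height_lt (l : Ptn) {i : ℕ} (hi : 1 ≤ i) (h : l.height < i) :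
    l.part i = 0 := by
  by_contra hne
  obtain ⟨N, hN⟩ := l.eventually_zero
  have hbdd : BddAbove {j | 1 ≤ j ∧ l.part j ≠ 0} := by
    refine ⟨N, fun j hj => ?_⟩
    by_contra hlt
    exact hj.2 (hN j (le_of_not_ge hlt))
  exact absurd (le_csSup hbdd ⟨hi, hne⟩) (not_le.mpr h)

lemma le_height_of_part_ne (l : Ptn) {i : ℕ} (hi : 1 ≤ i) (h : l.part i ≠ 0) :
    i ≤ l.height := by
  by_contra hlt
  exact h (part_eq_zero_of_height_lt l hi (lt_of_not_ge hlt))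

lemma part_pos_of_le_height (l : Ptn) {i : ℕ} (hi : 1 ≤ i) (h : i ≤ l.height) :
    0 < l.part i := by
  have hne : {j | 1 ≤ j ∧ l.part j ≠ 0}.Nonempty := by
    by_contra hempty
    rw [Set.not_nonempty_iff_eq_empty] at hempty
    have : l.height = 0 := by rw [Ptn.height, hempty, csSup_empty]; rfl
    omega
  obtain ⟨N, hN⟩ := l.eventually_zero
  have hbdd : BddAbove {j | 1 ≤ j ∧ l.part j ≠ 0} := by
    refine ⟨N, fun j hj => ?_⟩
    by_contra hlt
    exact hj.2 (hN j (le_of_not_ge hlt))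
  have hmem : l.height ∈ {j | 1 ≤ j ∧ l.part j ≠ 0} := Nat.sSup_mem hne hbdd
  have := l.antitone hi h
  have := hmem.2
  omega

/-- shifted beta numbers -/
noncomputable def bd (l : Ptn) (i : ℕ) : ℤ := (l.part i : ℤ) + (l.height : ℤ) - (i : ℤ)

lemma bd_strict_anti (l : Ptn) {i j : ℕ} (hi : 1 ≤ i) (hij : i < j) :
    bd l j < bd l i := by
  have := l.antitone hi (le_of_lt hij)
  unfold bd; push_cast; omega

lemma bd_of_height_lt (l : Ptn) {i : ℕ} (h : l.height < i) :
    bd l i = (l.height : ℤ) - i := by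
  have h1 : 1 ≤ i := by omega
  have := part_eq_zero_of_height_lt l h1 h
  unfold bd; rw [this]; push_cast; ring

lemma bd_pos (l : Ptn) {i : ℕ} (hi : 1 ≤ i) (h : i ≤ l.height) :
    1 ≤ bd l i := by
  have := part_pos_of_le_height l hi h
  unfold bd; push_cast; omega

lemma bead_of_neg (l : Ptn) {n : ℤ} (hn : n < 0) :
    ∃ i, 1 ≤ i ∧ bd l i = n := by
  refine ⟨l.height + (-n).toNat, by omega, ?_⟩
  have h1 : l.height < l.height + (-n).toNat := by omega
  rw [bd_of_height_lt l h1]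
  push_cast; omega

lemma bead_nonneg_le (l : Ptn) {n : ℤ} {i : ℕ} (hi : 1 ≤ i) (hb : bd l i = n) (hn : 0 ≤ n) :
    i ≤ l.height := by
  by_contra hlt
  have := bd_of_height_lt l (lt_of_not_ge hlt)
  have : (l.height : ℤ) < i := by exact_mod_cast Nat.lt_of_not_le hlt
  omega





/-- the shifted abacus of `l` -/
noncomputable def Lam (l : Ptn) : Abacus where
  f := fun n => if ∃ i, 1 ≤ i ∧ bd l i = n then true else false
  low := by
    refine ⟨-1, fun n hn => ?_⟩
    simp only [if_pos (bead_of_neg l (by omega : n < 0))]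
  high := by
    refine ⟨bd l 1 + 1, fun n hn => ?_⟩
    simp only [ite_eq_right_iff]
    rintro ⟨i, hi, hb⟩
    rcases Nat.lt_or_ge 1 i with h | h
    · have := bd_strict_anti l (le_refl 1) h
      omega
    · interval_cases i
      omega

lemma Lam_true_iff (l : Ptn) (n : ℤ) :
    (Lam l).f n = true ↔ ∃ i, 1 ≤ i ∧ bd l i = n := by
  by_cases h : ∃ i, 1 ≤ i ∧ bd l i = n <;> simp [Lam, h]

lemma Lam_false_iff (l : Ptn) (n : ℤ) :
    (Lam l).f n = false ↔ ¬ ∃ i, 1 ≤ i ∧ bd l i = n := by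
  rw [← Lam_true_iff]
  simp

lemma Lam_displays (l : Ptn) : Displays (Lam l) l.part := by
  refine ⟨bd l, fun i hi => bd_strict_anti l hi (by omega), fun n => Lam_true_iff l n, ?_⟩
  intro i hi
  rcases Nat.lt_or_ge l.height i with hgt | hle
  · rw [part_eq_zero_of_height_lt l hi hgt]
    have : {n : ℤ | n ≤ bd l i ∧ (Lam l).f n = false} = ∅ := by
      ext n
      simp only [Set.mem_setOf_eq, Set.mem_empty_iff_false, iff_false, not_and]
      intro hn
      have hbneg : bd l i < 0 := by
        rw [bd_of_height_lt l hgt]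
        have : (l.height : ℤ) < i := by exact_mod_cast hgt
        omega
      rw [Lam_false_iff]
      push_neg
      exact bead_of_neg l (show n < 0 by omega)
    rw [this, Set.ncard_empty]
  · have hkey : {n : ℤ | n ≤ bd l i ∧ (Lam l).f n = false} =
        ↑((Finset.Icc (0:ℤ) (bd l i)) \ (Finset.Icc i l.height).image (bd l)) := by
      ext n
      simp only [Set.mem_setOf_eq, Finset.coe_sdiff, Set.mem_diff, Finset.coe_Icc,
        Set.mem_Icc, Finset.coe_image, Set.mem_image, Finset.mem_coe, Finset.mem_Icc]
      constructor
      · rintro ⟨hle', hf⟩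
        rw [Lam_false_iff] at hf
        push_neg at hf
        have hn0 : 0 ≤ n := by
          by_contra hneg
          obtain ⟨j, hj1, hjb⟩ := bead_of_neg l (show n < 0 by omega)
          exact (hf j hj1) hjb
        refine ⟨⟨hn0, hle'⟩, ?_⟩
        rintro ⟨j, ⟨hj1, hj2⟩, hjb⟩
        exact hf j (by omega) hjb
      · rintro ⟨⟨hn0, hle'⟩, hnim⟩
        refine ⟨hle', ?_⟩
        rw [Lam_false_iff]
        rintro ⟨j, hj1, hjb⟩
        have hjh : j ≤ l.height := bead_nonneg_le l hj1 hjb hn0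
        have hij : i ≤ j := by
          by_contra hji
          have := bd_strict_anti l hj1 (lt_of_not_ge hji)
          omega
        exact hnim ⟨j, ⟨hij, hjh⟩, hjb⟩
    rw [hkey, Set.ncard_coe_finset]
    have hsub : (Finset.Icc i l.height).image (bd l) ⊆ Finset.Icc (0:ℤ) (bd l i) := by
      intro n hn
      simp only [Finset.mem_image, Finset.mem_Icc] at hn ⊢
      obtain ⟨j, ⟨hj1, hj2⟩, hjb⟩ := hn
      have h1 : 1 ≤ bd l j := bd_pos l (by omega) hj2
      have h2 : bd l j ≤ bd l i := by
        rcases Nat.eq_or_lt_of_le hj1 with h | h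
        · rw [h]
        · exact le_of_lt (bd_strict_anti l hi h)
      omega
    rw [Finset.card_sdiff_of_subset hsub]
    have hinj : Set.InjOn (bd l) ↑(Finset.Icc i l.height) := by
      intro x hx y hy hxy
      simp only [Finset.coe_Icc, Set.mem_Icc] at hx hy
      by_contra hne
      rcases Nat.lt_or_ge x y with h | h
      · have := bd_strict_anti l (show 1 ≤ x by omega) h; omega
      · have := bd_strict_anti l (show 1 ≤ y by omega) (show y < x by omega); omega
    rw [Finset.card_image_of_injOn hinj]
    have hb : bd l i = (l.part i : ℤ) + l.height - i := rfl
    have h1 : 0 ≤ bd l i := le_trans (by omega) (bd_pos l hi hle)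
    rw [Int.card_Icc, Nat.card_Icc]
    have hpart : 0 < l.part i := part_pos_of_le_height l hi hle
    have hih : (i : ℤ) ≤ (l.height : ℤ) := by exact_mod_cast hle
    omega





def Aset (p : ℕ) (m : Ptn) (c : ZMod p) : Set ℤ := {n | 0 ≤ n ∧ Beta m n ∧ (n : ZMod p) = c}

def Bset (p : ℕ) (m : Ptn) (c : ZMod p) : Set ℤ := {n | n < 0 ∧ ¬ Beta m n ∧ (n : ZMod p) = c}

noncomputable def delta (p : ℕ) (m : Ptn) (c : ZMod p) : ℤ :=
  ((Aset p m c).ncard : ℤ) - ((Bset p m c).ncard : ℤ)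

lemma Aset_finite (p : ℕ) (m : Ptn) (c : ZMod p) : (Aset p m c).Finite := by
  apply Set.Finite.subset (Set.finite_Icc (0:ℤ) (m.part 1))
  rintro n ⟨hn0, ⟨i, hi1, hie⟩, -⟩
  have h1 : m.part i ≤ m.part 1 := m.antitone (le_refl 1) hi1
  have : (1:ℤ) ≤ i := by exact_mod_cast hi1
  constructor
  · exact hn0
  · have : (m.part i : ℤ) ≤ m.part 1 := by exact_mod_cast h1
    omega

lemma Bset_finite (p : ℕ) (m : Ptn) (c : ZMod p) : (Bset p m c).Finite := by
  obtain ⟨N, hN⟩ := m.eventually_zero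
  apply Set.Finite.subset (Set.finite_Icc (-(N:ℤ) - 1) 0)
  rintro n ⟨hn0, hnb, -⟩
  constructor
  · by_contra hlt
    push_neg at hlt
    apply hnb
    refine ⟨(-n).toNat, by omega, ?_⟩
    have hge : N ≤ (-n).toNat := by omega
    rw [hN _ hge]
    push_cast
    omega
  · omega

lemma delta_hook {p : ℕ} (hp : 0 < p) {l m : Ptn} (h : RemoveHook p l m) (c : ZMod p) :
    delta p m c = delta p l c := by
  obtain ⟨a, ha, hna, hspec⟩ := h
  have hresap : ((a - p : ℤ) : ZMod p) = ((a : ℤ) : ZMod p) := by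
    push_cast
    simp
  have hppos : (0:ℤ) < p := by exact_mod_cast hp
  rcases le_or_gt 0 (a - p) with hcaseA | hAB
  · -- 0 ≤ a - p
    have hB : Bset p m c = Bset p l c := by
      ext n
      simp only [Bset, Set.mem_setOf_eq]
      constructor
      · rintro ⟨hn, hnb, hr⟩
        refine ⟨hn, fun hbl => hnb ?_, hr⟩
        exact (hspec n).mpr ⟨by omega, Or.inr hbl⟩
      · rintro ⟨hn, hnb, hr⟩
        refine ⟨hn, fun hbm => hnb ?_, hr⟩
        rcases ((hspec n).mp hbm).2 with h1 | h1
        · omega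
        · exact h1
    by_cases hc : ((a : ℤ) : ZMod p) = c
    · have haA : a ∈ Aset p l c := ⟨by omega, ha, hc⟩
      have hA : Aset p m c = insert (a - p) (Aset p l c \ {a}) := by
        ext n
        simp only [Aset, Set.mem_setOf_eq, Set.mem_insert_iff, Set.mem_diff,
          Set.mem_singleton_iff]
        constructor
        · rintro ⟨hn0, hbm, hr⟩
          obtain ⟨hne, h1⟩ := (hspec n).mp hbm
          rcases h1 with h1 | h1
          · exact Or.inl h1
          · exact Or.inr ⟨⟨hn0, h1, hr⟩, hne⟩
        · rintro (rfl | ⟨⟨hn0, hbl, hr⟩, hne⟩)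
          · exact ⟨hcaseA, (hspec _).mpr ⟨by omega, Or.inl rfl⟩, by rw [hresap]; exact hc⟩
          · exact ⟨hn0, (hspec n).mpr ⟨hne, Or.inr hbl⟩, hr⟩
      have hnm : a - p ∉ Aset p l c \ {a} := by
        rintro ⟨⟨-, hb, -⟩, -⟩
        exact hna hb
      have hfin : (Aset p l c \ {a}).Finite := (Aset_finite p l c).diff
      have e1 : (Aset p m c).ncard = (Aset p l c \ {a}).ncard + 1 := by
        rw [hA, Set.ncard_insert_of_notMem hnm hfin]
      have e2 : (Aset p l c \ {a}).ncard + 1 = (Aset p l c).ncard :=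
        Set.ncard_diff_singleton_add_one haA (Aset_finite p l c)
      unfold delta
      rw [hB, e1, e2]
    · have hA : Aset p m c = Aset p l c := by
        ext n
        simp only [Aset, Set.mem_setOf_eq]
        constructor
        · rintro ⟨hn0, hbm, hr⟩
          obtain ⟨hne, h1⟩ := (hspec n).mp hbm
          rcases h1 with rfl | h1
          · exact absurd (hresap.symm.trans hr) hc
          · exact ⟨hn0, h1, hr⟩
        · rintro ⟨hn0, hbl, hr⟩
          refine ⟨hn0, (hspec n).mpr ⟨?_, Or.inr hbl⟩, hr⟩
          rintro rfl
          exact hc hr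
      unfold delta
      rw [hA, hB]
  · rcases le_or_gt 0 a with hcaseB | hcaseC
    · -- a - p < 0 ≤ a
      by_cases hc : ((a : ℤ) : ZMod p) = c
      · have haA : a ∈ Aset p l c := ⟨hcaseB, ha, hc⟩
        have hapB : a - p ∈ Bset p l c := ⟨hAB, hna, by rw [hresap]; exact hc⟩
        have hA : Aset p m c = Aset p l c \ {a} := by
          ext n
          simp only [Aset, Set.mem_setOf_eq, Set.mem_diff, Set.mem_singleton_iff]
          constructor
          · rintro ⟨hn0, hbm, hr⟩
            obtain ⟨hne, h1⟩ := (hspec n).mp hbm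
            rcases h1 with h1 | h1
            · omega
            · exact ⟨⟨hn0, h1, hr⟩, hne⟩
          · rintro ⟨⟨hn0, hbl, hr⟩, hne⟩
            exact ⟨hn0, (hspec n).mpr ⟨hne, Or.inr hbl⟩, hr⟩
        have hB : Bset p m c = Bset p l c \ {a - p} := by
          ext n
          simp only [Bset, Set.mem_setOf_eq, Set.mem_diff, Set.mem_singleton_iff]
          constructor
          · rintro ⟨hn, hnb, hr⟩
            have hnbl : ¬ Beta l n := fun hbl => hnb ((hspec n).mpr ⟨by omega, Or.inr hbl⟩)
            have hnap : n ≠ a - p := by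
              rintro rfl
              exact hnb ((hspec _).mpr ⟨by omega, Or.inl rfl⟩)
            exact ⟨⟨hn, hnbl, hr⟩, hnap⟩
          · rintro ⟨⟨hn, hnbl, hr⟩, hne⟩
            refine ⟨hn, fun hbm => ?_, hr⟩
            rcases ((hspec n).mp hbm).2 with h1 | h1
            · exact hne h1
            · exact hnbl h1
        unfold delta
        rw [hA, hB]
        have e1 := Set.ncard_diff_singleton_add_one haA (Aset_finite p l c)
        have e2 := Set.ncard_diff_singleton_add_one hapB (Bset_finite p l c)
        omega
      · have hA : Aset p m c = Aset p l c := by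
          ext n
          simp only [Aset, Set.mem_setOf_eq]
          constructor
          · rintro ⟨hn0, hbm, hr⟩
            obtain ⟨hne, h1⟩ := (hspec n).mp hbm
            rcases h1 with rfl | h1
            · exact absurd (hresap.symm.trans hr) hc
            · exact ⟨hn0, h1, hr⟩
          · rintro ⟨hn0, hbl, hr⟩
            refine ⟨hn0, (hspec n).mpr ⟨?_, Or.inr hbl⟩, hr⟩
            rintro rfl
            exact hc hr
        have hB : Bset p m c = Bset p l c := by
          ext n
          simp only [Bset, Set.mem_setOf_eq]
          constructor
          · rintro ⟨hn, hnb, hr⟩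
            refine ⟨hn, fun hbl => hnb ((hspec n).mpr ⟨by omega, Or.inr hbl⟩), hr⟩
          · rintro ⟨hn, hnbl, hr⟩
            refine ⟨hn, fun hbm => ?_, hr⟩
            obtain ⟨hne, h1⟩ := (hspec n).mp hbm
            rcases h1 with rfl | h1
            · exact hc (hresap ▸ hr)
            · exact hnbl h1
        unfold delta
        rw [hA, hB]
    · -- a < 0
      have hA : Aset p m c = Aset p l c := by
        ext n
        simp only [Aset, Set.mem_setOf_eq]
        constructor
        · rintro ⟨hn0, hbm, hr⟩
          obtain ⟨hne, h1⟩ := (hspec n).mp hbm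
          rcases h1 with h1 | h1
          · omega
          · exact ⟨hn0, h1, hr⟩
        · rintro ⟨hn0, hbl, hr⟩
          exact ⟨hn0, (hspec n).mpr ⟨by omega, Or.inr hbl⟩, hr⟩
      by_cases hc : ((a : ℤ) : ZMod p) = c
      · have hapB : a - p ∈ Bset p l c := ⟨by omega, hna, by rw [hresap]; exact hc⟩
        have hB : Bset p m c = insert a (Bset p l c \ {a - p}) := by
          ext n
          simp only [Bset, Set.mem_setOf_eq, Set.mem_insert_iff, Set.mem_diff,
            Set.mem_singleton_iff]
          constructor
          · rintro ⟨hn, hnb, hr⟩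
            by_cases hna' : n = a
            · exact Or.inl hna'
            · have hnbl : ¬ Beta l n := fun hbl =>
                hnb ((hspec n).mpr ⟨hna', Or.inr hbl⟩)
              have hnap : n ≠ a - p := by
                rintro rfl
                exact hnb ((hspec _).mpr ⟨by omega, Or.inl rfl⟩)
              exact Or.inr ⟨⟨hn, hnbl, hr⟩, hnap⟩
          · rintro (rfl | ⟨⟨hn, hnbl, hr⟩, hne⟩)
            · refine ⟨hcaseC, fun hbm => ?_, hc⟩
              exact ((hspec _).mp hbm).1 rfl
            · refine ⟨hn, fun hbm => ?_, hr⟩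
              rcases ((hspec n).mp hbm).2 with h1 | h1
              · exact hne h1
              · exact hnbl h1
        have hnm : a ∉ Bset p l c \ {a - p} := by
          rintro ⟨⟨-, hnb, -⟩, -⟩
          exact hnb ha
        have hfin : (Bset p l c \ {a - p}).Finite := (Bset_finite p l c).diff
        have e1 : (Bset p m c).ncard = (Bset p l c \ {a - p}).ncard + 1 := by
          rw [hB, Set.ncard_insert_of_notMem hnm hfin]
        have e2 := Set.ncard_diff_singleton_add_one hapB (Bset_finite p l c)
        unfold delta
        rw [hA]
        omega
      · have hB : Bset p m c = Bset p l c := by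
          ext n
          simp only [Bset, Set.mem_setOf_eq]
          constructor
          · rintro ⟨hn, hnb, hr⟩
            refine ⟨hn, fun hbl => ?_, hr⟩
            apply hnb
            refine (hspec n).mpr ⟨?_, Or.inr hbl⟩
            rintro rfl
            exact hc hr
          · rintro ⟨hn, hnbl, hr⟩
            refine ⟨hn, fun hbm => ?_, hr⟩
            obtain ⟨hne, h1⟩ := (hspec n).mp hbm
            rcases h1 with rfl | h1
            · exact hc (hresap ▸ hr)
            · exact hnbl h1
        unfold delta
        rw [hA, hB]

lemma delta_zero_of_emptyCore {p : ℕ} (hp : 0 < p) {l : Ptn} (hcore : EmptyCore p l)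
    (c : ZMod p) : delta p l c = 0 := by
  obtain ⟨c0, ⟨hchain, -⟩, hzero⟩ := hcore
  have hstep : ∀ x y : Ptn, Relation.ReflTransGen (RemoveHook p) x y →
      delta p x c = delta p y c := by
    intro x y hxy
    induction hxy with
    | refl => rfl
    | tail h1 h2 ih => rw [ih, delta_hook hp h2]
  rw [hstep l c0 hchain]
  have hA : Aset p c0 c = ∅ := by
    ext n
    simp only [Aset, Set.mem_setOf_eq, Set.mem_empty_iff_false, iff_false]
    rintro ⟨hn0, ⟨i, hi1, hie⟩, -⟩
    rw [hzero i hi1] at hie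
    omega
  have hB : Bset p c0 c = ∅ := by
    ext n
    simp only [Bset, Set.mem_setOf_eq, Set.mem_empty_iff_false, iff_false]
    rintro ⟨hn, hnb, -⟩
    exfalso
    apply hnb
    refine ⟨(-n).toNat, by omega, ?_⟩
    rw [hzero _ (by omega)]
    push_cast
    omega
  unfold delta
  rw [hA, hB, Set.ncard_empty]
  simp

section Translate

variable (p : ℕ) (l : Ptn)

/-- unshifted beta numbers -/
def ee (l : Ptn) (i : ℕ) : ℤ := (l.part i : ℤ) - (i : ℤ)

lemma ee_inj (l : Ptn) {i j : ℕ} (hi : 1 ≤ i) (hj : 1 ≤ j) (h : ee l i = ee l j) : i = j := by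
  by_contra hne
  rcases Nat.lt_or_ge i j with hlt | hge
  · have := l.antitone hi (le_of_lt hlt)
    unfold ee at h
    omega
  · have hlt : j < i := by omega
    have := l.antitone hj (le_of_lt hlt)
    unfold ee at h
    omega

lemma ee_le_height_bound (l : Ptn) {i : ℕ} (hi : 1 ≤ i) (h : i ≤ l.height) :
    -(l.height : ℤ) < ee l i := by
  have := part_pos_of_le_height l hi h
  unfold ee
  have : (i : ℤ) ≤ l.height := by exact_mod_cast h
  omega

lemma mem_height_of_ee (l : Ptn) {i : ℕ} (hi : 1 ≤ i) (h : -(l.height : ℤ) ≤ ee l i) :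
    i ≤ l.height := by
  by_cases hz : l.part i = 0
  · unfold ee at h
    rw [hz] at h
    push_cast at h
    omega
  · exact le_height_of_part_ne l hi hz

lemma mem_height_of_ee_nonneg (l : Ptn) {i : ℕ} (hi : 1 ≤ i) (h : 0 ≤ ee l i) :
    i ≤ l.height := by
  apply mem_height_of_ee l hi
  have : (0:ℤ) ≤ l.height := by positivity
  omega

noncomputable def F1 (c : ZMod p) : Finset ℕ :=
  (Finset.Icc 1 l.height).filter (fun i => ((ee l i : ℤ) : ZMod p) = c)

noncomputable def Fneg (c : ZMod p) : Finset ℤ :=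
  (Finset.Ico (-(l.height : ℤ)) 0).filter (fun n => ((n : ℤ) : ZMod p) = c)

lemma F1_card_eq_Fneg_card (hp : 0 < p) (hd : ∀ c : ZMod p, delta p l c = 0) (c : ZMod p) :
    (F1 p l c).card = (Fneg p l c).card := by
  classical
  -- Aset as a finset image
  have hAeq : Aset p l c = ↑(((F1 p l c).filter (fun i => 0 ≤ ee l i)).image (ee l)) := by
    ext n
    simp only [Aset, Set.mem_setOf_eq, Finset.coe_image, Set.mem_image, Finset.mem_coe,
      Finset.mem_filter, F1, Finset.mem_Icc]
    constructor
    · rintro ⟨hn0, ⟨i, hi1, hie⟩, hr⟩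
      have hee : ee l i = n := hie
      have hih : i ≤ l.height := mem_height_of_ee_nonneg l hi1 (by rw [hee]; exact hn0)
      exact ⟨i, ⟨⟨⟨hi1, hih⟩, by rw [hee]; exact hr⟩, by rw [hee]; exact hn0⟩, hee⟩
    · rintro ⟨i, ⟨⟨⟨hi1, hih⟩, hr⟩, hpos⟩, hie⟩
      exact ⟨by rw [← hie]; exact hpos, ⟨i, hi1, hie⟩, by rw [← hie]; exact hr⟩
  have hinjA : Set.InjOn (ee l) ↑((F1 p l c).filter (fun i => 0 ≤ ee l i)) := by
    intro x hx y hy hxy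
    simp only [Finset.coe_filter, Set.mem_setOf_eq, F1, Finset.mem_filter, Finset.mem_Icc] at hx hy
    exact ee_inj l hx.1.1.1 hy.1.1.1 hxy
  have hAcard : (Aset p l c).ncard = ((F1 p l c).filter (fun i => 0 ≤ ee l i)).card := by
    rw [hAeq, Set.ncard_coe_finset, Finset.card_image_of_injOn hinjA]
  -- Bset as a finset difference
  set G : Finset ℤ := ((F1 p l c).filter (fun i => ¬ 0 ≤ ee l i)).image (ee l) with hG
  have hGsub : G ⊆ Fneg p l c := by
    intro n hn
    simp only [hG, Finset.mem_image, Finset.mem_filter, F1, Finset.mem_Icc] at hn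
    obtain ⟨i, ⟨⟨⟨hi1, hih⟩, hr⟩, hneg⟩, hie⟩ := hn
    simp only [Fneg, Finset.mem_filter, Finset.mem_Ico]
    have := ee_le_height_bound l hi1 hih
    exact ⟨⟨by omega, by omega⟩, by rw [hie] at hr; exact hr⟩
  have hBeq : Bset p l c = ↑(Fneg p l c \ G) := by
    ext n
    simp only [Bset, Set.mem_setOf_eq, Finset.coe_sdiff, Set.mem_diff, Finset.mem_coe,
      Fneg, Finset.mem_filter, Finset.mem_Ico]
    constructor
    · rintro ⟨hn, hnb, hr⟩
      have hge : -(l.height : ℤ) ≤ n := by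
        by_contra hlt
        push_neg at hlt
        apply hnb
        refine ⟨(-n).toNat, by omega, ?_⟩
        have h1 : l.height < (-n).toNat := by omega
        rw [part_eq_zero_of_height_lt l (by omega) h1]
        push_cast
        omega
      refine ⟨⟨⟨hge, hn⟩, hr⟩, ?_⟩
      intro hnG
      simp only [hG, Finset.mem_image, Finset.mem_filter, F1, Finset.mem_Icc] at hnG
      obtain ⟨i, ⟨⟨⟨hi1, -⟩, -⟩, -⟩, hie⟩ := hnG
      exact hnb ⟨i, hi1, hie⟩
    · rintro ⟨⟨⟨hge, hn⟩, hr⟩, hnG⟩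
      refine ⟨hn, ?_, hr⟩
      rintro ⟨i, hi1, hie⟩
      apply hnG
      have hee : ee l i = n := hie
      have hih : i ≤ l.height := mem_height_of_ee l hi1 (by rw [hee]; exact hge)
      simp only [hG, Finset.mem_image, Finset.mem_filter, F1, Finset.mem_Icc]
      exact ⟨i, ⟨⟨⟨hi1, hih⟩, by rw [hee]; exact hr⟩, by rw [hee]; omega⟩, hee⟩
  have hinjB : Set.InjOn (ee l) ↑((F1 p l c).filter (fun i => ¬ 0 ≤ ee l i)) := by
    intro x hx y hy hxy
    simp only [Finset.coe_filter, Set.mem_setOf_eq, F1, Finset.mem_filter, Finset.mem_Icc] at hx hy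
    exact ee_inj l hx.1.1.1 hy.1.1.1 hxy
  have hGcard : G.card = ((F1 p l c).filter (fun i => ¬ 0 ≤ ee l i)).card :=
    Finset.card_image_of_injOn hinjB
  have hBcard : (Bset p l c).ncard = (Fneg p l c).card - G.card := by
    rw [hBeq, Set.ncard_coe_finset, Finset.card_sdiff_of_subset hGsub]
  have hsplit := Finset.card_filter_add_card_filter_not
    (s := F1 p l c) (p := fun i => 0 ≤ ee l i)
  have hGle : G.card ≤ (Fneg p l c).card := Finset.card_le_card hGsub
  have hdc := hd c
  unfold delta at hdc
  rw [hAcard, hBcard] at hdc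
  omega

lemma Fneg_card_le_one (hhp : l.height ≤ p) (c : ZMod p) (hp : 0 < p) :
    (Fneg p l c).card ≤ 1 := by
  rw [Finset.card_le_one]
  intro a ha b hb
  simp only [Fneg, Finset.mem_filter, Finset.mem_Ico] at ha hb
  have hmod : a ≡ b [ZMOD p] := by
    rw [← ZMod.intCast_eq_intCast_iff]
    rw [ha.2, hb.2]
  have hdvd : (p : ℤ) ∣ b - a := Int.ModEq.dvd hmod
  obtain ⟨k, hk⟩ := hdvd
  have hhp' : (l.height : ℤ) ≤ p := by exact_mod_cast hhp
  have hppos : (0:ℤ) < p := by exact_mod_cast hp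
  have h1 : -(p:ℤ) < b - a := by omega
  have h2 : b - a < p := by omega
  have hk0 : k = 0 := by
    by_contra hkne
    rcases lt_or_gt_of_ne hkne with hneg | hpos
    · have : (p:ℤ) * k ≤ p * (-1) := by
        apply mul_le_mul_of_nonneg_left (by omega) (by omega)
      omega
    · have : (p:ℤ) * 1 ≤ p * k := by
        apply mul_le_mul_of_nonneg_left (by omega) (by omega)
      omega
  rw [hk0, mul_zero] at hk
  omega

end Translate





lemma emod_shift {p a r k : ℤ} (hr : 0 ≤ r) (hrp : r < p) (ha : a = p * k + r) : a % p = r := by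
  subst ha
  rw [add_comm, Int.add_mul_emod_self_left]
  exact Int.emod_eq_of_lt hr hrp

lemma bd_sub_height (l : Ptn) (i : ℕ) : bd l i - (l.height : ℤ) = ee l i := by
  unfold bd ee; ring

section Res

variable {p : ℕ} {l : Ptn} (hp : 0 < p) (hh : l.height < p)
  (hd : ∀ c : ZMod p, delta p l c = 0)

include hp hh hd

lemma bd_emod_lt {i : ℕ} (hi : 1 ≤ i) (hih : i ≤ l.height) :
    bd l i % p < (l.height : ℤ) := by
  set c : ZMod p := ((ee l i : ℤ) : ZMod p) with hc
  have hiF : i ∈ F1 p l c := by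
    simp only [F1, Finset.mem_filter, Finset.mem_Icc]
    exact ⟨⟨hi, hih⟩, hc.symm⟩
  have hpos : 0 < (Fneg p l c).card := by
    rw [← F1_card_eq_Fneg_card p l hp hd c]
    exact Finset.card_pos.mpr ⟨i, hiF⟩
  obtain ⟨n, hn⟩ := Finset.card_pos.mp hpos
  simp only [Fneg, Finset.mem_filter, Finset.mem_Ico] at hn
  obtain ⟨⟨hn1, hn2⟩, hnr⟩ := hn
  have hmod : ee l i ≡ n [ZMOD p] := by
    rw [← ZMod.intCast_eq_intCast_iff]
    exact hc ▸ hnr.symm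
  have hmod2 : bd l i ≡ n + l.height [ZMOD p] := by
    have : bd l i = ee l i + l.height := by rw [← bd_sub_height l i]; ring
    rw [this]
    exact hmod.add_right _
  have heq : bd l i % p = (n + l.height) % p := hmod2
  rw [heq]
  have hplt : (l.height : ℤ) < p := by exact_mod_cast hh
  rw [Int.emod_eq_of_lt (by omega) (by omega)]
  omega

lemma bd_emod_inj {i j : ℕ} (hi : 1 ≤ i) (hih : i ≤ l.height) (hj : 1 ≤ j)
    (hjh : j ≤ l.height) (h : bd l i % p = bd l j % p) : i = j := by
  have hmod : ee l i ≡ ee l j [ZMOD p] := by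
    have h1 : bd l i ≡ bd l j [ZMOD p] := h
    have := h1.sub_right (l.height : ℤ)
    rwa [bd_sub_height, bd_sub_height] at this
  set c : ZMod p := ((ee l i : ℤ) : ZMod p) with hc
  have hiF : i ∈ F1 p l c := by
    simp only [F1, Finset.mem_filter, Finset.mem_Icc]
    exact ⟨⟨hi, hih⟩, hc.symm⟩
  have hjF : j ∈ F1 p l c := by
    simp only [F1, Finset.mem_filter, Finset.mem_Icc]
    refine ⟨⟨hj, hjh⟩, ?_⟩
    rw [hc, ZMod.intCast_eq_intCast_iff]
    exact hmod.symm
  have hcard : (F1 p l c).card ≤ 1 := by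
    rw [F1_card_eq_Fneg_card p l hp hd c]
    exact Fneg_card_le_one p l (le_of_lt hh) c hp
  exact Finset.card_le_one.mp hcard i hiF j hjF

lemma bd_emod_surj {d : ℕ} (hdh : d < l.height) :
    ∃ i, 1 ≤ i ∧ i ≤ l.height ∧ bd l i % p = (d : ℤ) := by
  classical
  set g : ℕ → ℕ := fun i => (bd l i % p).toNat with hg
  have hmaps : ∀ i ∈ Finset.Icc 1 l.height, g i ∈ Finset.range l.height := by
    intro i hi
    simp only [Finset.mem_Icc] at hi
    simp only [Finset.mem_range, hg]
    have h1 := bd_emod_lt hp hh hd hi.1 hi.2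
    have h2 : 0 ≤ bd l i % p := Int.emod_nonneg _ (by exact_mod_cast hp.ne')
    omega
  have hinj : Set.InjOn g ↑(Finset.Icc 1 l.height) := by
    intro x hx y hy hxy
    simp only [Finset.coe_Icc, Set.mem_Icc] at hx hy
    apply bd_emod_inj hp hh hd hx.1 hx.2 hy.1 hy.2
    have h2 : 0 ≤ bd l x % p := Int.emod_nonneg _ (by exact_mod_cast hp.ne')
    have h3 : 0 ≤ bd l y % p := Int.emod_nonneg _ (by exact_mod_cast hp.ne')
    simp only [hg] at hxy
    omega
  have himg : (Finset.Icc 1 l.height).image g = Finset.range l.height := by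
    apply Finset.eq_of_subset_of_card_le
    · intro x hx
      simp only [Finset.mem_image] at hx
      obtain ⟨i, hi, rfl⟩ := hx
      exact hmaps i hi
    · rw [Finset.card_range, Finset.card_image_of_injOn hinj, Nat.card_Icc]
      omega
  have hdmem : d ∈ (Finset.Icc 1 l.height).image g := by
    rw [himg]
    exact Finset.mem_range.mpr hdh
  simp only [Finset.mem_image, Finset.mem_Icc] at hdmem
  obtain ⟨i, ⟨hi1, hi2⟩, hgi⟩ := hdmem
  refine ⟨i, hi1, hi2, ?_⟩
  have h2 : 0 ≤ bd l i % p := Int.emod_nonneg _ (by exact_mod_cast hp.ne')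
  simp only [hg] at hgi
  omega

/-! ### Part B : normality -/

omit hp hh hd in
lemma remRes_eq (i : ℕ) : l.remRes p i = (((bd l i - l.height : ℤ)) : ZMod p) := by
  rw [Ptn.remRes]
  congr 1
  rw [bd_sub_height]
  rfl

omit hp hh hd in
lemma addRes_eq (i : ℕ) : l.addRes p i = (((bd l i + 1 - l.height : ℤ)) : ZMod p) := by
  rw [Ptn.addRes]
  congr 1
  have := bd_sub_height l i
  unfold ee at this
  omega

omit hp hh hd in
lemma bd_succ_le (l' : Ptn) {i : ℕ} (hi : 1 ≤ i) : bd l' (i+1) ≤ bd l' i - 1 := by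
  have := bd_strict_anti l' hi (show i < i + 1 by omega)
  omega

lemma normal_of {i : ℕ} (hi1 : 1 ≤ i) (hih : i ≤ l.height)
    (hno : ∀ j, 1 ≤ j → j ≤ l.height → bd l j % p = (bd l i - 1) % p →
      bd l j < bd l i - 1) :
    l.Normal p i := by
  constructor
  · -- removable
    refine ⟨hi1, ?_⟩
    rcases Nat.eq_or_lt_of_le hih with heq | hlt
    · rw [part_eq_zero_of_height_lt l (by omega) (by omega)]
      exact part_pos_of_le_height l hi1 hih
    · by_contra hcon
      push_neg at hcon
      have hpe : l.part (i+1) = l.part i := le_antisymm (l.antitone hi1 (by omega)) hcon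
      have hbe : bd l (i+1) = bd l i - 1 := by
        unfold bd
        rw [hpe]
        push_cast
        ring
      have := hno (i+1) (by omega) (by omega) (by rw [hbe])
      omega
  · intro u hu1 hur
    have hempty : ((Finset.Ico u i).filter
        (fun j => l.Addable j ∧ l.addRes p j = l.remRes p i)) = ∅ := by
      rw [Finset.filter_eq_empty_iff]
      rintro j hj ⟨-, hres⟩
      simp only [Finset.mem_Ico] at hj
      have hj1 : 1 ≤ j := by omega
      have hjh : j ≤ l.height := by omega
      rw [addRes_eq, remRes_eq] at hres
      have hmod : bd l j + 1 - l.height ≡ bd l i - l.height [ZMOD p] := by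
        rw [← ZMod.intCast_eq_intCast_iff]
        exact hres
      have hmod2 : bd l j ≡ bd l i - 1 [ZMOD p] := by
        have := hmod.add_right ((l.height : ℤ) - 1)
        have heq1 : bd l j + 1 - l.height + (l.height - 1) = bd l j := by ring
        have heq2 : bd l i - l.height + (l.height - 1) = bd l i - 1 := by ring
        rwa [heq1, heq2] at this
      have := hno j hj1 hjh hmod2
      have hgt : bd l i < bd l j := bd_strict_anti l hj1 hj.2
      omega
    rw [hempty, Finset.card_empty]
    omega

lemma normal_res_zero {i : ℕ} (hi1 : 1 ≤ i) (hih : i ≤ l.height)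
    (h0 : bd l i % p = 0) : l.Normal p i := by
  apply normal_of hp hh hd hi1 hih
  intro j hj1 hjh hjm
  exfalso
  have hjlt := bd_emod_lt hp hh hd hj1 hjh
  obtain ⟨k, hk⟩ : (p:ℤ) ∣ bd l i := Int.dvd_of_emod_eq_zero h0
  have hplt : (l.height : ℤ) < p := by exact_mod_cast hh
  have hi1' : (1:ℤ) ≤ bd l i := bd_pos l hi1 hih
  have hmod : (bd l i - 1) % p = (p:ℤ) - 1 := by
    apply emod_shift (p := (p:ℤ)) (k := k - 1) (by omega) (by omega)
    rw [hk]; ring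
  rw [hmod] at hjm
  omega

lemma pos_step (hres : ∀ r s, l.Normal p r → l.Normal p s → l.remRes p r = l.remRes p s)
    {i j d : ℕ} (hi1 : 1 ≤ i) (hih : i ≤ l.height) (hj1 : 1 ≤ j) (hjh : j ≤ l.height)
    (hd1 : 1 ≤ d) (hdh : d < l.height)
    (hdi : bd l i % p = (d : ℤ)) (hdj : bd l j % p = (d : ℤ) - 1) :
    bd l i - 1 ≤ bd l j := by
  by_contra hcon
  push_neg at hcon
  have hplt : (l.height : ℤ) < p := by exact_mod_cast hh
  -- the residue of bd l i - 1 is d - 1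
  have hmodi : (bd l i - 1) % p = (d : ℤ) - 1 := by
    obtain ⟨k, hk⟩ : ∃ k, bd l i = p * k + d := by
      refine ⟨bd l i / p, ?_⟩
      have := Int.mul_ediv_add_emod (bd l i) p
      omega
    apply emod_shift (p := (p:ℤ)) (k := k) (by omega) (by omega)
    rw [hk]; ring
  have hni : l.Normal p i := by
    apply normal_of hp hh hd hi1 hih
    intro j' hj'1 hj'h hj'm
    rw [hmodi] at hj'm
    have : j' = j := bd_emod_inj hp hh hd hj'1 hj'h hj1 hjh (by rw [hj'm, hdj])
    subst this
    omega
  obtain ⟨i0, hi01, hi0h, hi0m⟩ := bd_emod_surj hp hh hd (show 0 < l.height by omega)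
  have hi0m' : bd l i0 % p = 0 := by exact_mod_cast hi0m
  have hn0 : l.Normal p i0 := normal_res_zero hp hh hd hi01 hi0h hi0m'
  have hrr := hres i i0 hni hn0
  rw [remRes_eq, remRes_eq] at hrr
  have hmod : bd l i - l.height ≡ bd l i0 - l.height [ZMOD p] := by
    rw [← ZMod.intCast_eq_intCast_iff]
    exact hrr
  have hmod2 : bd l i ≡ bd l i0 [ZMOD p] := by
    have := hmod.add_right (l.height : ℤ)
    simpa using this
  have heq : bd l i % p = bd l i0 % p := hmod2
  rw [hdi, hi0m'] at heq
  omega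

end Res



lemma w_anti {h : ℕ} {w : ℕ → ℕ} (hw : ∀ c, 1 ≤ c → c < h → w c ≤ w (c-1)) :
    ∀ c c', c ≤ c' → c' < h → w c' ≤ w c := by
  intro c c' hle hlt
  induction c' with
  | zero =>
    have : c = 0 := by omega
    rw [this]
  | succ n ih =>
    rcases Nat.eq_or_lt_of_le hle with heq | hlt2
    · rw [heq]
    · have h1 : w (n+1) ≤ w n := by
        have := hw (n+1) (by omega) hlt
        simpa using this
      have h2 : w n ≤ w c := ih (by omega) (by omega)
      omega

lemma blocks : ∀ (h : ℕ) (w : ℕ → ℕ), (∀ c, 1 ≤ c → c < h → w c ≤ w (c-1)) →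
    ∃ (k : ℕ) (r ι : ℕ → ℕ), 1 ≤ k ∧ r 1 = 0 ∧
      (∀ t, 1 ≤ t → t < k → r t < r (t + 1)) ∧ r k = h ∧
      (∀ t, 1 ≤ t → t + 1 ≤ k - 1 → ι (t + 1) < ι t) ∧
      (∀ c, c < h → ∃ t, 1 ≤ t ∧ t ≤ k - 1 ∧ r t ≤ c ∧ c < r (t + 1)) ∧
      (∀ t c, 1 ≤ t → t ≤ k - 1 → r t ≤ c → c < r (t + 1) → ι t = w c) := by
  intro h
  induction h using Nat.strong_induction_on with
  | _ h ih =>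
    intro w hw
    rcases Nat.eq_zero_or_pos h with rfl | hpos
    · exact ⟨1, fun _ => 0, fun _ => 0, le_refl 1, rfl, by omega, rfl, by omega,
        by omega, by omega⟩
    · have hex : ∃ c, w c = w (h-1) := ⟨h-1, rfl⟩
      have hms : w (Nat.find hex) = w (h-1) := Nat.find_spec hex
      set m := Nat.find hex with hm
      have hmle : m ≤ h - 1 := Nat.find_le rfl
      have hconst : ∀ c, m ≤ c → c < h → w c = w (h-1) := by
        intro c hc1 hc2
        have h1 : w c ≤ w m := w_anti hw m c hc1 hc2
        have h2 : w (h-1) ≤ w c := w_anti hw c (h-1) (by omega) (by omega)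
        omega
      obtain ⟨k, r, ι, hk1, hr1, hrinc, hrk, hdec, hcov, hval⟩ :=
        ih m (by omega) w (fun c hc1 hc2 => hw c hc1 (by omega))
      have hrmono : ∀ t t', 1 ≤ t → t ≤ t' → t' ≤ k → r t ≤ r t' := by
        intro t t' ht htt' ht'k
        induction t' with
        | zero => omega
        | succ n ihn =>
          rcases Nat.eq_or_lt_of_le htt' with heq | hlt2
          · rw [heq]
          · have h1 : r n < r (n+1) := hrinc n (by omega) (by omega)
            have h2 : r t ≤ r n := ihn (by omega) (by omega)
            omega
      classical
      obtain ⟨rr, hrr1, hrr2⟩ :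
          ∃ rr : ℕ → ℕ, (∀ t, t ≠ k + 1 → rr t = r t) ∧ rr (k+1) = h :=
        ⟨fun t => if t = k + 1 then h else r t,
          fun t ht => if_neg ht, if_pos rfl⟩
      obtain ⟨ii, hii1, hii2⟩ :
          ∃ ii : ℕ → ℕ, (∀ t, t ≠ k → ii t = ι t) ∧ ii k = w (h-1) :=
        ⟨fun t => if t = k then w (h-1) else ι t,
          fun t ht => if_neg ht, if_pos rfl⟩
      refine ⟨k + 1, rr, ii, by omega, ?_, ?_, hrr2, ?_, ?_, ?_⟩
      · rw [hrr1 1 (by omega)]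
        exact hr1
      · intro t ht1 htk
        rcases Nat.eq_or_lt_of_le (Nat.lt_succ_iff.mp htk) with heq | hlt2
        · rw [heq, hrr1 k (by omega), hrr2, hrk]
          omega
        · rw [hrr1 t (by omega), hrr1 (t+1) (by omega)]
          exact hrinc t ht1 hlt2
      · intro t ht1 htk
        have htk' : t + 1 ≤ k := by omega
        rcases Nat.eq_or_lt_of_le htk' with heq | hlt2
        · have hk2 : 2 ≤ k := by omega
          rw [heq, hii2, hii1 t (by omega)]
          have hm1 : 1 ≤ m := by
            have h1 : r 1 < r 2 := hrinc 1 (le_refl 1) (by omega)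
            have h2 : r 2 ≤ r k := hrmono 2 k (by omega) (by omega) (le_refl k)
            omega
          have hιt : ι t = w (m - 1) := by
            apply hval t (m-1) ht1 (by omega)
            · have h3 : r t < r (t+1) := hrinc t ht1 (by omega)
              rw [heq, hrk] at h3
              omega
            · rw [heq, hrk]
              omega
          rw [hιt]
          have hle : w (h-1) ≤ w (m-1) := w_anti hw (m-1) (h-1) (by omega) (by omega)
          have hne : w (m-1) ≠ w (h-1) := by
            intro hcon
            have := Nat.find_le (h := hex) hcon
            omega
          omega
        · rw [hii1 (t+1) (by omega), hii1 t (by omega)]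
          exact hdec t ht1 (by omega)
      · intro c hc
        rcases Nat.lt_or_ge c m with hcm | hcm
        · obtain ⟨t, ht1, htk, hrc, hcr⟩ := hcov c hcm
          refine ⟨t, ht1, by omega, ?_, ?_⟩
          · rw [hrr1 t (by omega)]
            exact hrc
          · rw [hrr1 (t+1) (by omega)]
            exact hcr
        · refine ⟨k, by omega, by omega, ?_, ?_⟩
          · rw [hrr1 k (by omega), hrk]
            exact hcm
          · rw [hrr2]
            exact hc
      · intro t c ht1 htk hrc hcr
        rcases Nat.eq_or_lt_of_le (show t ≤ k by omega) with heq | hlt2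
        · rw [heq] at hrc hcr ⊢
          rw [hii2]
          rw [hrr1 k (by omega), hrk] at hrc
          rw [hrr2] at hcr
          exact (hconst c hrc hcr).symm
        · rw [hii1 t (by omega)]
          rw [hrr1 t (by omega)] at hrc
          rw [hrr1 (t+1) (by omega)] at hcr
          exact hval t c ht1 (by omega) hrc hcr


lemma mono_of_strict {r : ℕ → ℕ} {k : ℕ}
    (hrinc : ∀ t, 1 ≤ t → t < k → r t < r (t+1)) :
    ∀ a b, 1 ≤ a → a ≤ b → b ≤ k → r a ≤ r b := by
  intro a b ha hab hbk
  induction b with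
  | zero => omega
  | succ n ihn =>
    rcases Nat.eq_or_lt_of_le hab with heq | hlt2
    · rw [heq]
    · have h1 : r n < r (n+1) := hrinc n (by omega) (by omega)
      have h2 : r a ≤ r n := ihn (by omega) (by omega)
      omega

end Stair

/-- Every partition with height `< p`, empty `p`-core, and all normal nodes of a single
residue, is a staircase partition `st(r₂,…,r_k; i₁,…,i_{k-1})`. -/
theorem stmt13 (p : ℕ) (hp : 0 < p) (l : Ptn)
    (hh : l.height < p)
    (hcore : EmptyCore p l)
    (hres : ∀ r s, l.Normal p r → l.Normal p s → l.remRes p r = l.remRes p s) :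
    ∃ (k : ℕ) (r ι : ℕ → ℕ), 1 ≤ k ∧ r 1 = 0 ∧
      (∀ t, 1 ≤ t → t < k → r t < r (t + 1)) ∧ r k < p ∧
      (∀ t, 1 ≤ t → t + 1 ≤ k - 1 → ι (t + 1) < ι t) ∧
      ∃ Λ : Abacus, Displays Λ l.part ∧
        ∀ n : ℤ, Λ.f n = true ↔
          (n < 0 ∨ ∃ t, 1 ≤ t ∧ t ≤ k - 1 ∧
            ((p * ι t + r t : ℕ) : ℤ) ≤ n ∧ n < ((p * ι t + r (t + 1) : ℕ) : ℤ)) := by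
  classical
  have hd : ∀ c : ZMod p, Stair.delta p l c = 0 := Stair.delta_zero_of_emptyCore hp hcore
  have hpne : (p : ℤ) ≠ 0 := by exact_mod_cast hp.ne'
  -- choose for each residue d < height the row idx d carrying the bead of residue d
  have hsurj : ∀ d : ℕ, ∃ i : ℕ, d < l.height →
      (1 ≤ i ∧ i ≤ l.height ∧ Stair.bd l i % p = (d : ℤ)) := by
    intro d
    by_cases hdlt : d < l.height
    · obtain ⟨i, h1, h2, h3⟩ := Stair.bd_emod_surj hp hh hd hdlt
      exact ⟨i, fun _ => ⟨h1, h2, h3⟩⟩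
    · exact ⟨1, fun hc => absurd hc hdlt⟩
  choose idx hidx using hsurj
  set w : ℕ → ℕ := fun d => (Stair.bd l (idx d) / p).toNat with hwdef
  have hbdpos : ∀ d, d < l.height → 1 ≤ Stair.bd l (idx d) := fun d hd' =>
    Stair.bd_pos l (hidx d hd').1 (hidx d hd').2.1
  have hwcast : ∀ d, d < l.height → (w d : ℤ) = Stair.bd l (idx d) / p := by
    intro d hd'
    have h3 : 0 ≤ Stair.bd l (idx d) / p :=
      Int.ediv_nonneg (by have := hbdpos d hd'; omega) (by positivity)
    simp only [hwdef]
    exact Int.toNat_of_nonneg h3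
  have hbdval : ∀ d, d < l.height → Stair.bd l (idx d) = (p : ℤ) * (w d) + d := by
    intro d hd'
    rw [hwcast d hd', ← (hidx d hd').2.2]
    exact (Int.mul_ediv_add_emod _ _).symm
  have hwanti : ∀ c, 1 ≤ c → c < l.height → w c ≤ w (c - 1) := by
    intro c h1 h2
    have hdj : Stair.bd l (idx (c-1)) % p = (c : ℤ) - 1 := by
      have := (hidx (c-1) (by omega)).2.2
      rw [this]
      push_cast
      omega
    have hstep := Stair.pos_step hp hh hd hres (hidx c h2).1 (hidx c h2).2.1
      (hidx (c-1) (by omega)).1 (hidx (c-1) (by omega)).2.1 h1 h2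
      (hidx c h2).2.2 hdj
    have e1 := hbdval c h2
    have e2 := hbdval (c-1) (by omega)
    have e3 : ((c - 1 : ℕ) : ℤ) = (c : ℤ) - 1 := by push_cast; omega
    rw [e3] at e2
    have hA : (p : ℤ) * (w c) ≤ (p : ℤ) * (w (c-1)) := by linarith
    have hB : (w c : ℤ) ≤ (w (c-1) : ℤ) :=
      le_of_mul_le_mul_left hA (by exact_mod_cast hp)
    exact_mod_cast hB
  obtain ⟨k, r, ι, hk1, hr1, hrinc, hrk, hdec, hcov, hval⟩ :=
    Stair.blocks l.height w hwanti
  refine ⟨k, r, ι, hk1, hr1, hrinc, by rw [hrk]; exact hh, hdec,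
    Stair.Lam l, Stair.Lam_displays l, ?_⟩
  intro n
  rw [Stair.Lam_true_iff]
  constructor
  · rintro ⟨i, hi1, hbi⟩
    rcases lt_or_ge n 0 with hneg | hpos
    · exact Or.inl hneg
    · right
      have hih : i ≤ l.height := Stair.bead_nonneg_le l hi1 hbi hpos
      have hmod := Stair.bd_emod_lt hp hh hd hi1 hih
      have hmn : 0 ≤ Stair.bd l i % p := Int.emod_nonneg _ hpne
      set d : ℕ := (Stair.bd l i % p).toNat with hddef
      have hdlt : d < l.height := by omega
      have hidd := hidx d hdlt
      have hieq : idx d = i := by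
        apply Stair.bd_emod_inj hp hh hd hidd.1 hidd.2.1 hi1 hih
        rw [hidd.2.2]
        omega
      have hbv := hbdval d hdlt
      rw [hieq] at hbv
      obtain ⟨t, ht1, htk, hrc, hcr⟩ := hcov d hdlt
      have hvt := hval t d ht1 htk hrc hcr
      refine ⟨t, ht1, htk, ?_, ?_⟩
      · rw [hvt]
        push_cast
        have hrc' : ((r t : ℕ) : ℤ) ≤ (d : ℤ) := by exact_mod_cast hrc
        rw [← hbi, hbv]
        linarith
      · rw [hvt]
        push_cast
        have hcr' : (d : ℤ) < ((r (t+1) : ℕ) : ℤ) := by exact_mod_cast hcr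
        rw [← hbi, hbv]
        linarith
  · rintro (hneg | ⟨t, ht1, htk, hlo, hhi⟩)
    · exact Stair.bead_of_neg l hneg
    · have hlo' : (p : ℤ) * (ι t) + (r t) ≤ n := by
        push_cast at hlo
        linarith
      have hhi' : n < (p : ℤ) * (ι t) + (r (t+1)) := by
        push_cast at hhi
        linarith
      set d : ℕ := (n - (p : ℤ) * (ι t)).toNat with hddef
      have hd0 : 0 ≤ n - (p : ℤ) * (ι t) := by
        have : (0:ℤ) ≤ (r t : ℕ) := by positivity
        linarith
      have hdz : (d : ℤ) = n - (p : ℤ) * (ι t) := Int.toNat_of_nonneg hd0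
      have hrtd : r t ≤ d := by
        have : ((r t : ℕ) : ℤ) ≤ (d : ℤ) := by rw [hdz]; linarith
        exact_mod_cast this
      have hdrt : d < r (t+1) := by
        have : (d : ℤ) < ((r (t+1) : ℕ) : ℤ) := by rw [hdz]; linarith
        exact_mod_cast this
      have hdh : d < l.height := by
        have h2 : r (t+1) ≤ r k := Stair.mono_of_strict hrinc (t+1) k (by omega)
          (by omega) (le_refl k)
        omega
      have hvt := hval t d ht1 htk hrtd hdrt
      have hbv := hbdval d hdh
      refine ⟨idx d, (hidx d hdh).1, ?_⟩
      rw [hbv, ← hvt, hdz]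
      ring
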